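/- Let r ≥ 2, μ > 0, and let G be an n-vertex graph with δ(G) ≥ (1 − 1/r + μ)n, for sufficiently large n relative to r and 1/μ. Suppose V(G) has an equitable regular partition with reduced graph R on k clusters of size m each (with km ≥ (1−ε)n, ε small), and {v_1,...,v_r} is a clique in G, and W ⊆ V(R) with |W| ≤ r. Then there is a clique {V_1,...,V_r} in R − W such that |N_G(v_i,...,v_r) ∩ V_i| ≥ μm for every i ∈ [r]. -/

import Mathlib

set_option maxHeartbeats 1000000


/-- Claim 6.3: given a graph `G` with `δ(G) ≥ (1 - 1/r + μ)n`, an equitable cluster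
partition `P : Fin k → Finset (Fin n)` with clusters of size `m` and `km ≥ (1-ε)n`,
and a reduced graph `R` on the clusters with `δ(R) ≥ (1 - 1/r + μ/2)k`, for every
clique `v₁,...,v_r` in `G` and every `W ⊆ V(R)` with `|W| ≤ r` there is a clique
`V₁,...,V_r` in `R - W` with `|N_G(v_i,...,v_r) ∩ V_i| ≥ μm` for every `i`. -/
theorem stmt17 (r : ℕ) (hr : 2 ≤ r) (μ : ℝ) (hμ : 0 < μ) :
    ∃ k₀ : ℕ, ∃ ε₀ : ℝ, 0 < ε₀ ∧ ∀ k : ℕ, k₀ ≤ k → ∀ ε : ℝ, 0 < ε → ε ≤ ε₀ →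
      ∀ n m : ℕ, ∀ G : SimpleGraph (Fin n), ∀ P : Fin k → Finset (Fin n),
        (∀ i j, i ≠ j → Disjoint (P i) (P j)) →
        (∀ i, (P i).card = m) →
        (1 - ε) * n ≤ ((k * m : ℕ) : ℝ) →
        (∀ v : Fin n, (1 - 1 / (r : ℝ) + μ) * n ≤ ((G.neighborSet v).ncard : ℝ)) →
        ∀ R : SimpleGraph (Fin k),
          (∀ i : Fin k, (1 - 1 / (r : ℝ) + μ / 2) * k ≤ ((R.neighborSet i).ncard : ℝ)) →
          ∀ v : Fin r → Fin n, Function.Injective v →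
            (∀ i j, i ≠ j → G.Adj (v i) (v j)) →
            ∀ W : Finset (Fin k), W.card ≤ r →
              ∃ c : Fin r → Fin k, Function.Injective c ∧ (∀ i, c i ∉ W) ∧
                (∀ i j, i ≠ j → R.Adj (c i) (c j)) ∧
                ∀ i : Fin r, μ * m ≤
                  (({u ∈ (P (c i) : Set (Fin n)) |
                      ∀ j : Fin r, i ≤ j → G.Adj (v j) u}).ncard : ℝ) := by
  classical
  refine ⟨⌈8 * ((r:ℝ) + 1) / μ⌉₊, min (μ/16) (1/4), lt_min (by positivity) (by norm_num), ?_⟩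
  intro k hk ε hε hεle n m G P hPdisj hPcard hkm hδG R hδR v hvinj hvclique W hW
  have hε1 : ε ≤ μ/16 := le_trans hεle (min_le_left _ _)
  have hε2 : ε ≤ 1/4 := le_trans hεle (min_le_right _ _)
  have hr0 : 0 < r := by omega
  have hrR : (0:ℝ) < r := by exact_mod_cast hr0
  have hrR2 : (2:ℝ) ≤ r := by exact_mod_cast hr
  have hn0 : 0 < n := (v ⟨0, hr0⟩).pos
  have hnR : (1:ℝ) ≤ n := by exact_mod_cast hn0
  have hkR : 8 * ((r:ℝ) + 1) / μ ≤ k :=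
    le_trans (Nat.le_ceil _) (by exact_mod_cast hk)
  have hkm' : (1 - ε) * n ≤ (k:ℝ) * m := by push_cast at hkm; exact hkm
  -- union of clusters
  have hU : (Finset.univ.biUnion P).card = k * m := by
    rw [Finset.card_biUnion (fun x _ y _ hxy => hPdisj x y hxy)]
    simp [hPcard, Finset.sum_const, mul_comm]
  have hUn : k * m ≤ n := by
    have h := Finset.card_le_univ (Finset.univ.biUnion P)
    simpa [hU] using h
  have hkmR : (k:ℝ) * m ≤ n := by exact_mod_cast hUn
  have hm0 : 0 < m := by
    by_contra h
    have hm : m = 0 := by omega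
    rw [hm] at hkm'
    push_cast at hkm'
    nlinarith
  have hmR : (1:ℝ) ≤ m := by exact_mod_cast hm0
  have hkm0 : (0:ℝ) ≤ (k:ℝ)*m := by positivity
  have hεn : ε * n ≤ (1/4:ℝ) * n := mul_le_mul_of_nonneg_right hε2 (by positivity)
  have hn2km : (n:ℝ) ≤ 2*((k:ℝ)*m) := by nlinarith
  have hslack : (n:ℝ) - k*m ≤ 2*ε*((k:ℝ)*m) := by
    have h2 : ε * n ≤ ε * (2*((k:ℝ)*m)) := mul_le_mul_of_nonneg_left hn2km hε.le
    nlinarith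
  -- degree complements
  have hGdeg : ∀ u : Fin n, (((G.neighborFinset u)ᶜ.card : ℕ) : ℝ) ≤ (1/(r:ℝ) - μ) * n := by
    intro u
    have h1 : (G.neighborSet u).ncard = (G.neighborFinset u).card := by
      rw [SimpleGraph.neighborFinset_def, Set.ncard_eq_toFinset_card']
    have h2 := hδG u
    rw [h1] at h2
    have h4 : (G.neighborFinset u).card ≤ n := by
      simpa using Finset.card_le_univ (G.neighborFinset u)
    have h3 : (G.neighborFinset u)ᶜ.card = n - (G.neighborFinset u).card := by
      simp [Finset.card_compl]
    rw [h3, Nat.cast_sub h4]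
    have : (1 - 1/(r:ℝ) + μ) * n ≤ (G.neighborFinset u).card := h2
    push_cast
    nlinarith
  have hRdeg : ∀ x : Fin k, (((R.neighborFinset x)ᶜ.card : ℕ) : ℝ) ≤ (1/(r:ℝ) - μ/2) * k := by
    intro x
    have h1 : (R.neighborSet x).ncard = (R.neighborFinset x).card := by
      rw [SimpleGraph.neighborFinset_def, Set.ncard_eq_toFinset_card']
    have h2 := hδR x
    rw [h1] at h2
    have h4 : (R.neighborFinset x).card ≤ k := by
      simpa using Finset.card_le_univ (R.neighborFinset x)
    have h3 : (R.neighborFinset x)ᶜ.card = k - (R.neighborFinset x).card := by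
      simp [Finset.card_compl]
    rw [h3, Nat.cast_sub h4]
    push_cast
    nlinarith
  -- common neighbourhoods in G
  set N : Fin r → Finset (Fin n) :=
    fun t => Finset.univ.filter (fun u => ∀ j, t ≤ j → G.Adj (v j) u) with hNdef
  have hNcard : ∀ t : Fin r,
      (n:ℝ) * ((t.val:ℝ) / r) + ((r:ℝ) - t.val) * (μ * n) ≤ ((N t).card : ℝ) := by
    intro t
    have hsub : (N t)ᶜ ⊆ (Finset.Ici t).biUnion (fun j => (G.neighborFinset (v j))ᶜ) := by
      intro u hu
      simp only [hNdef, Finset.mem_compl, Finset.mem_filter, Finset.mem_univ, true_and] at hu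
      push_neg at hu
      obtain ⟨j, hj, hadj⟩ := hu
      exact Finset.mem_biUnion.2 ⟨j, Finset.mem_Ici.2 hj, by
        simp [SimpleGraph.mem_neighborFinset, hadj]⟩
    have htr : t.val ≤ r := t.isLt.le
    have hcard1 : (((N t)ᶜ.card : ℕ) : ℝ) ≤ ((r:ℝ) - t.val) * ((1/(r:ℝ) - μ) * n) := by
      calc (((N t)ᶜ.card : ℕ) : ℝ)
          ≤ ((((Finset.Ici t).biUnion fun j => (G.neighborFinset (v j))ᶜ).card : ℕ) : ℝ) := by
            exact_mod_cast Finset.card_le_card hsub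
        _ ≤ ∑ j ∈ Finset.Ici t, (((G.neighborFinset (v j))ᶜ.card : ℕ) : ℝ) := by
            exact_mod_cast Finset.card_biUnion_le
        _ ≤ ∑ _j ∈ Finset.Ici t, (1/(r:ℝ) - μ) * n :=
            Finset.sum_le_sum (fun j _ => hGdeg (v j))
        _ = ((r:ℝ) - t.val) * ((1/(r:ℝ) - μ) * n) := by
            rw [Finset.sum_const, Fin.card_Ici, nsmul_eq_mul, Nat.cast_sub htr]
    have hcompl : ((N t).card : ℝ) + (((N t)ᶜ.card : ℕ) : ℝ) = n := by
      have h := Finset.card_add_card_compl (N t)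
      have h' : (N t).card + (N t)ᶜ.card = n := by simpa using h
      exact_mod_cast h'
    have heq : (n:ℝ) * ((t.val:ℝ)/r) + ((r:ℝ) - t.val) * (μ * n)
        = n - ((r:ℝ) - t.val) * ((1/(r:ℝ) - μ) * n) := by
      field_simp
      ring
    rw [heq]
    linarith
  -- good clusters
  set Good : Fin r → Finset (Fin k) :=
    fun t => Finset.univ.filter (fun V => μ * m ≤ (((N t ∩ P V).card : ℕ) : ℝ)) with hGooddef
  have hGoodcard : ∀ t : Fin r,
      (k:ℝ) * ((t.val:ℝ)/r + ((r:ℝ) - t.val - 1) * μ - 2*ε) ≤ ((Good t).card : ℝ) := by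
    intro t
    have hdisj2 : ∀ x ∈ (Finset.univ : Finset (Fin k)), ∀ y ∈ Finset.univ, x ≠ y →
        Disjoint (N t ∩ P x) (N t ∩ P y) := fun x _ y _ hxy =>
      (hPdisj x y hxy).mono inf_le_right inf_le_right
    have hsum : (Finset.univ.biUnion (fun V => N t ∩ P V)).card = ∑ V, (N t ∩ P V).card :=
      Finset.card_biUnion hdisj2
    have hsub : N t ⊆ (Finset.univ.biUnion (fun V => N t ∩ P V)) ∪ (Finset.univ.biUnion P)ᶜ := by
      intro u hu
      by_cases h : u ∈ Finset.univ.biUnion P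
      · obtain ⟨V, _, hV⟩ := Finset.mem_biUnion.1 h
        exact Finset.mem_union_left _
          (Finset.mem_biUnion.2 ⟨V, Finset.mem_univ V, Finset.mem_inter.2 ⟨hu, hV⟩⟩)
      · exact Finset.mem_union_right _ (Finset.mem_compl.2 h)
    have hcompl : ((Finset.univ.biUnion P)ᶜ).card = n - k*m := by
      rw [Finset.card_compl, hU]; simp
    have h1 : ((N t).card : ℝ) ≤ (∑ V, (((N t ∩ P V).card : ℕ) : ℝ)) + ((n:ℝ) - k*m) := by
      have hc := Finset.card_le_card hsub
      have hc2 := Finset.card_union_le (Finset.univ.biUnion (fun V => N t ∩ P V))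
        ((Finset.univ.biUnion P)ᶜ)
      rw [hsum, hcompl] at hc2
      have hc3 : (N t).card ≤ (∑ V, (N t ∩ P V).card) + (n - k*m) := le_trans hc hc2
      have hc4 : ((N t).card : ℝ) ≤ ((∑ V, (N t ∩ P V).card : ℕ) : ℝ) + (((n - k*m : ℕ)) : ℝ) := by
        exact_mod_cast hc3
      rw [Nat.cast_sub hUn] at hc4
      push_cast at hc4 ⊢
      linarith
    have h4 : (∑ V, (((N t ∩ P V).card : ℕ) : ℝ)) ≤ ((Good t).card : ℝ) * m + k * (μ * m) := by
      rw [← Finset.sum_filter_add_sum_filter_not Finset.univ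
        (fun V => μ * m ≤ (((N t ∩ P V).card : ℕ) : ℝ))]
      have hA : ∑ V ∈ Finset.univ.filter (fun V => μ * m ≤ (((N t ∩ P V).card : ℕ) : ℝ)),
          (((N t ∩ P V).card : ℕ) : ℝ) ≤ ((Good t).card : ℝ) * m := by
        have : ∀ V ∈ Finset.univ.filter (fun V => μ * m ≤ (((N t ∩ P V).card : ℕ) : ℝ)),
            (((N t ∩ P V).card : ℕ) : ℝ) ≤ (m:ℝ) := by
          intro V _
          have : (N t ∩ P V).card ≤ m := by
            rw [← hPcard V]; exact Finset.card_le_card Finset.inter_subset_right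
          exact_mod_cast this
        calc ∑ V ∈ Finset.univ.filter (fun V => μ * m ≤ (((N t ∩ P V).card : ℕ) : ℝ)),
              (((N t ∩ P V).card : ℕ) : ℝ)
            ≤ ∑ _V ∈ Finset.univ.filter (fun V => μ * m ≤ (((N t ∩ P V).card : ℕ) : ℝ)), (m:ℝ) :=
              Finset.sum_le_sum this
          _ = ((Good t).card : ℝ) * m := by rw [Finset.sum_const, nsmul_eq_mul, hGooddef]
      have hB : ∑ V ∈ Finset.univ.filter (fun V => ¬ (μ * m ≤ (((N t ∩ P V).card : ℕ) : ℝ))),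
          (((N t ∩ P V).card : ℕ) : ℝ) ≤ (k:ℝ) * (μ * m) := by
        have hμm : (0:ℝ) ≤ μ * m := by positivity
        calc ∑ V ∈ Finset.univ.filter (fun V => ¬ (μ * m ≤ (((N t ∩ P V).card : ℕ) : ℝ))),
              (((N t ∩ P V).card : ℕ) : ℝ)
            ≤ ∑ _V ∈ Finset.univ.filter (fun V => ¬ (μ * m ≤ (((N t ∩ P V).card : ℕ) : ℝ))),
              (μ * m) := Finset.sum_le_sum (fun V hV => by
                have := (Finset.mem_filter.1 hV).2
                linarith [lt_of_not_ge this])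
          _ = ((Finset.univ.filter (fun V => ¬ (μ * m ≤ (((N t ∩ P V).card : ℕ) : ℝ)))).card : ℝ)
              * (μ * m) := by rw [Finset.sum_const, nsmul_eq_mul]
          _ ≤ (k:ℝ) * (μ * m) := by
              apply mul_le_mul_of_nonneg_right _ hμm
              have := Finset.card_le_univ
                (Finset.univ.filter (fun V => ¬ (μ * m ≤ (((N t ∩ P V).card : ℕ) : ℝ))))
              simp only [Finset.card_univ, Fintype.card_fin] at this
              exact_mod_cast this
      linarith
    have h3 := hNcard t
    have hrt : (1:ℝ) ≤ (r:ℝ) - t.val := by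
      have := t.isLt
      have : (t.val:ℝ) + 1 ≤ r := by exact_mod_cast this
      linarith
    have htnn : (0:ℝ) ≤ (t.val:ℝ)/r := by positivity
    -- g*m ≥ km*(t/r + (r-t-1)μ - 2ε)
    have hfinal : ((k:ℝ) * ((t.val:ℝ)/r + ((r:ℝ) - t.val - 1) * μ - 2*ε)) * m
        ≤ ((Good t).card : ℝ) * m := by
      have e1 : (0:ℝ) ≤ ((t.val:ℝ)/r) * ((n:ℝ) - k*m) :=
        mul_nonneg htnn (by linarith)
      have e2 : (0:ℝ) ≤ (((r:ℝ) - t.val) * μ) * ((n:ℝ) - k*m) :=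
        mul_nonneg (mul_nonneg (by linarith) hμ.le) (by linarith)
      nlinarith
    have hmpos : (0:ℝ) < m := by linarith
    exact le_of_mul_le_mul_right hfinal hmpos
  -- common neighbourhoods in R
  have hCommon : ∀ S : Finset (Fin k),
      (k:ℝ) - (S.card : ℝ) * ((1/(r:ℝ) - μ/2) * k)
        ≤ (((Finset.univ.filter (fun x => ∀ j ∈ S, R.Adj j x)).card : ℕ) : ℝ) := by
    intro S
    set C := Finset.univ.filter (fun x => ∀ j ∈ S, R.Adj j x) with hC
    have hsub : Cᶜ ⊆ S.biUnion (fun j => (R.neighborFinset j)ᶜ) := by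
      intro x hx
      simp only [hC, Finset.mem_compl, Finset.mem_filter, Finset.mem_univ, true_and] at hx
      push_neg at hx
      obtain ⟨j, hj, hadj⟩ := hx
      exact Finset.mem_biUnion.2 ⟨j, hj, by simp [SimpleGraph.mem_neighborFinset, hadj]⟩
    have hcard1 : ((Cᶜ.card : ℕ) : ℝ) ≤ (S.card : ℝ) * ((1/(r:ℝ) - μ/2) * k) := by
      calc ((Cᶜ.card : ℕ) : ℝ)
          ≤ (((S.biUnion fun j => (R.neighborFinset j)ᶜ).card : ℕ) : ℝ) := by
            exact_mod_cast Finset.card_le_card hsub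
        _ ≤ ∑ j ∈ S, (((R.neighborFinset j)ᶜ.card : ℕ) : ℝ) := by
            exact_mod_cast Finset.card_biUnion_le
        _ ≤ ∑ _j ∈ S, (1/(r:ℝ) - μ/2) * k := Finset.sum_le_sum (fun j _ => hRdeg j)
        _ = (S.card : ℝ) * ((1/(r:ℝ) - μ/2) * k) := by
            rw [Finset.sum_const, nsmul_eq_mul]
    have hcompl : (C.card : ℝ) + ((Cᶜ.card : ℕ) : ℝ) = k := by
      have h := Finset.card_add_card_compl C
      have h' : C.card + Cᶜ.card = k := by simpa using h
      exact_mod_cast h'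
    linarith
  -- the greedy construction
  have key : ∀ i, ∀ hi : i ≤ r, ∃ c : Fin i → Fin k, Function.Injective c ∧
      (∀ j, c j ∉ W) ∧ (∀ a b, a ≠ b → R.Adj (c a) (c b)) ∧
      ∀ j : Fin i, c j ∈ Good ⟨j.val, lt_of_lt_of_le j.isLt hi⟩ := by
    intro i
    induction i with
    | zero =>
      exact fun _ => ⟨Fin.elim0, fun a => a.elim0, fun a => a.elim0,
        fun a => a.elim0, fun a => a.elim0⟩
    | succ i ih =>
      intro hi
      obtain ⟨c, hcinj, hcW, hcadj, hcgood⟩ := ih (Nat.le_of_succ_le hi)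
      set S : Finset (Fin k) := Finset.image c Finset.univ with hS
      have hScard : S.card = i := by
        rw [hS, Finset.card_image_of_injective _ hcinj, Finset.card_univ, Fintype.card_fin]
      have hir : i < r := hi
      set t : Fin r := ⟨i, hir⟩ with ht
      set C := Finset.univ.filter (fun x => ∀ j ∈ S, R.Adj j x) with hC
      have hbig : ((W ∪ S).card : ℝ) < (((Good t) ∩ C).card : ℝ) := by
        have h1 := hGoodcard t
        have h2 := hCommon S
        rw [hScard] at h2
        have h3 : ((Good t).card : ℝ) + (C.card : ℝ) - k ≤ (((Good t) ∩ C).card : ℝ) := by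
          have h := Finset.card_union_add_card_inter (Good t) C
          have h4 : ((Good t) ∪ C).card ≤ k := by
            have := Finset.card_le_univ ((Good t) ∪ C)
            simpa using this
          have h5 : ((Good t).card : ℝ) + (C.card : ℝ)
              = (((Good t) ∪ C).card : ℝ) + (((Good t) ∩ C).card : ℝ) := by
            exact_mod_cast h.symm
          have h6 : ((((Good t) ∪ C).card : ℕ) : ℝ) ≤ k := by exact_mod_cast h4
          linarith
        have h5 : ((W ∪ S).card : ℝ) ≤ (r:ℝ) + i := by
          have := Finset.card_union_le W S
          have h6 : (W ∪ S).card ≤ r + i := by omega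
          exact_mod_cast h6
        have hiv : (t.val : ℝ) = (i:ℝ) := by rw [ht]
        have hile : (i:ℝ) ≤ (r:ℝ) - 1 := by
          have : (i:ℝ) + 1 ≤ r := by exact_mod_cast hir
          linarith
        have hk0 : (0:ℝ) ≤ k := by positivity
        -- lower bound the intersection
        have hA : 3*μ/8 ≤ ((r:ℝ) - i - 1) * μ + (i:ℝ) * (μ/2) - 2*ε := by
          nlinarith
        have hchain : 3*((r:ℝ)+1) ≤ (k:ℝ) * (3*μ/8) := by
          have := mul_le_mul_of_nonneg_right hkR (show (0:ℝ) ≤ 3*μ/8 by positivity)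
          have heq : 8 * ((r:ℝ) + 1) / μ * (3*μ/8) = 3*((r:ℝ)+1) := by
            field_simp
          linarith [heq ▸ this]
        have hkA : (k:ℝ) * (3*μ/8) ≤ (k:ℝ) * (((r:ℝ) - i - 1) * μ + (i:ℝ) * (μ/2) - 2*ε) :=
          mul_le_mul_of_nonneg_left hA hk0
        have hexp : (k:ℝ) * ((t.val:ℝ)/r + ((r:ℝ) - t.val - 1) * μ - 2*ε)
            + ((k:ℝ) - (i:ℝ) * ((1/(r:ℝ) - μ/2) * k)) - k
            = (k:ℝ) * (((r:ℝ) - i - 1) * μ + (i:ℝ) * (μ/2) - 2*ε) := by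
          rw [hiv]; field_simp; ring
        have : (r:ℝ) + i < (((Good t) ∩ C).card : ℝ) := by
          have hge : (k:ℝ) * (((r:ℝ) - i - 1) * μ + (i:ℝ) * (μ/2) - 2*ε)
              ≤ (((Good t) ∩ C).card : ℝ) := by
            rw [← hexp]; linarith
          linarith
        linarith
      have hcard_lt : (W ∪ S).card < ((Good t) ∩ C).card := by exact_mod_cast hbig
      have hnsub : ¬ ((Good t) ∩ C ⊆ W ∪ S) := fun h =>
        absurd (Finset.card_le_card h) (by omega)
      obtain ⟨x, hx, hxns⟩ := Finset.not_subset.1 hnsub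
      have hxGood : x ∈ Good t := (Finset.mem_inter.1 hx).1
      have hxC := (Finset.mem_inter.1 hx).2
      have hxW : x ∉ W := fun h => hxns (Finset.mem_union_left _ h)
      have hxS : x ∉ S := fun h => hxns (Finset.mem_union_right _ h)
      have hxadj : ∀ j : Fin i, R.Adj (c j) x := by
        intro j
        have := (Finset.mem_filter.1 hxC).2
        exact this (c j) (Finset.mem_image.2 ⟨j, Finset.mem_univ j, rfl⟩)
      refine ⟨Fin.snoc c x, ?_, ?_, ?_, ?_⟩
      · intro a b hab
        induction a using Fin.lastCases with
        | last =>
          induction b using Fin.lastCases with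
          | last => rfl
          | cast j =>
            rw [Fin.snoc_last, Fin.snoc_castSucc] at hab
            exact absurd (Finset.mem_image.2 ⟨j, Finset.mem_univ j, hab.symm⟩) hxS
        | cast j =>
          induction b using Fin.lastCases with
          | last =>
            rw [Fin.snoc_last, Fin.snoc_castSucc] at hab
            exact absurd (Finset.mem_image.2 ⟨j, Finset.mem_univ j, hab⟩) hxS
          | cast j' =>
            rw [Fin.snoc_castSucc, Fin.snoc_castSucc] at hab
            rw [hcinj hab]
      · intro j
        induction j using Fin.lastCases with
        | last => rw [Fin.snoc_last]; exact hxW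
        | cast j => rw [Fin.snoc_castSucc]; exact hcW j
      · intro a b hab
        induction a using Fin.lastCases with
        | last =>
          induction b using Fin.lastCases with
          | last => exact absurd rfl hab
          | cast j =>
            rw [Fin.snoc_last, Fin.snoc_castSucc]
            exact (hxadj j).symm
        | cast j =>
          induction b using Fin.lastCases with
          | last =>
            rw [Fin.snoc_last, Fin.snoc_castSucc]
            exact hxadj j
          | cast j' =>
            rw [Fin.snoc_castSucc, Fin.snoc_castSucc]
            exact hcadj j j' (fun h => hab (by rw [h]))
      · intro j
        induction j using Fin.lastCases with
        | last =>
          rw [Fin.snoc_last]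
          exact hxGood
        | cast j =>
          rw [Fin.snoc_castSucc]
          exact hcgood j
  obtain ⟨c, hcinj, hcW, hcadj, hcgood⟩ := key r le_rfl
  refine ⟨c, hcinj, hcW, hcadj, ?_⟩
  intro i
  have hg : c i ∈ Good i := hcgood i
  have hg2 : μ * m ≤ (((N i ∩ P (c i)).card : ℕ) : ℝ) := (Finset.mem_filter.1 hg).2
  have hsetEq : {u ∈ (P (c i) : Set (Fin n)) | ∀ j : Fin r, i ≤ j → G.Adj (v j) u}
      = ↑(N i ∩ P (c i)) := by
    ext u
    simp [hNdef, and_comm]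
  rw [hsetEq, Set.ncard_coe_finset]
  exact hg2
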